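/- Let N : ℂⁿ → ℝ be a monotone norm and C > 0 a constant such that max_j |x_j| ≤ C·N(x) for all x ∈ ℂⁿ. Then for all ψ, φ ∈ ℂⁿ, N( (exp ψ_1 − exp φ_1, …, exp ψ_n − exp φ_n) ) ≤ N( (exp ψ_1, …, exp ψ_n) ) · ( exp(C·N(φ − ψ)) − 1 ); i.e., for u, v ∈ e^{nℂ} with log coordinates ψ, φ, the relative error bound ‖Pr u − Pr v‖ ≤ ‖Pr u‖·(‖v/u‖_*^C − 1) holds (Theorem Estimate). -/

import Mathlib

section HelperSection
open scoped Nat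

lemma abs_exp_sub_one_le' (z : ℂ) :
    ‖Complex.exp z - 1‖ ≤ Real.exp ‖z‖ - 1 := by
  have hzc : Complex.exp z = ∑' n : ℕ, z ^ n / n ! := by
    rw [Complex.exp_eq_exp_ℂ, NormedSpace.exp_eq_tsum_div]
  have hzr : Real.exp ‖z‖ = ∑' n : ℕ, ‖z‖ ^ n / n ! := by
    rw [Real.exp_eq_exp_ℝ, NormedSpace.exp_eq_tsum_div]
  have hsc : Summable fun n : ℕ => z ^ n / (n ! : ℂ) :=
    NormedSpace.expSeries_div_summable z
  have hsr : Summable fun n : ℕ => ‖z‖ ^ n / (n ! : ℝ) :=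
    NormedSpace.expSeries_div_summable ‖z‖
  have hc1 : Complex.exp z - 1 = ∑' n : ℕ, z ^ (n + 1) / (n + 1)! := by
    rw [hzc, Summable.tsum_eq_zero_add hsc]
    simp
  have hr1 : Real.exp ‖z‖ - 1
      = ∑' n : ℕ, ‖z‖ ^ (n + 1) / (n + 1)! := by
    rw [hzr, Summable.tsum_eq_zero_add hsr]
    simp
  rw [hc1, hr1]
  calc ‖∑' n : ℕ, z ^ (n + 1) / (n + 1)!‖
      ≤ ∑' n : ℕ, ‖z ^ (n + 1) / (n + 1)!‖ := by
        refine norm_tsum_le_tsum_norm ?_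
        exact (hsc.comp_injective (add_left_injective 1)).norm
    _ = ∑' n : ℕ, ‖z‖ ^ (n + 1) / (n + 1)! := by
        congr 1; ext n
        simp [norm_div, norm_pow, Complex.norm_natCast]


end HelperSection

/-- Theorem Estimate: if `N` is a monotone norm on `ℂⁿ` with `max_j |x_j| ≤ C·N x`, then for
log coordinates `ψ, φ` of `u, v ∈ e^{nℂ}`,
`‖Pr u − Pr v‖ ≤ ‖Pr u‖ · (‖v/u‖_*^C − 1)`. -/
theorem estimate_theorem (n : ℕ) (N : (Fin n → ℂ) → ℝ) (C : ℝ)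
    (hN0 : ∀ x, 0 ≤ N x)
    (hNeq0 : ∀ x, N x = 0 ↔ x = 0)
    (hNsmul : ∀ (α : ℂ) (x), N (α • x) = ‖α‖ * N x)
    (hNadd : ∀ x y, N (x + y) ≤ N x + N y)
    (hNmono : ∀ x y, (∀ j, ‖x j‖ ≤ ‖y j‖) → N x ≤ N y)
    (hC : 0 < C)
    (hCbound : ∀ x, ∀ j, ‖x j‖ ≤ C * N x)
    (ψ φ : Fin n → ℂ) :
    N (fun j => Complex.exp (ψ j) - Complex.exp (φ j))
      ≤ N (fun j => Complex.exp (ψ j)) * (Real.exp (C * N (φ - ψ)) - 1) := by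
  set r : ℝ := Real.exp (C * N (φ - ψ)) - 1 with hr
  have hr0 : 0 ≤ r := by
    have : (0:ℝ) ≤ C * N (φ - ψ) := mul_nonneg hC.le (hN0 _)
    simp [hr, Real.one_le_exp this]
  have key : N (fun j => Complex.exp (ψ j) - Complex.exp (φ j))
      ≤ N ((r:ℂ) • fun j => Complex.exp (ψ j)) := by
    apply hNmono
    intro j
    have h1 : Complex.exp (φ j) = Complex.exp (ψ j) * Complex.exp (φ j - ψ j) := by
      rw [← Complex.exp_add]; congr 1; ring
    have h2 : ‖Complex.exp (ψ j) - Complex.exp (φ j)‖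
        = ‖Complex.exp (ψ j)‖ * ‖Complex.exp (φ j - ψ j) - 1‖ := by
      have he : Complex.exp (ψ j) - Complex.exp (φ j)
          = -(Complex.exp (ψ j) * (Complex.exp (φ j - ψ j) - 1)) := by
        rw [h1]; ring
      rw [he, norm_neg, norm_mul]
    have h3 : ‖Complex.exp (φ j - ψ j) - 1‖ ≤ r := by
      refine le_trans (abs_exp_sub_one_le' _) ?_
      rw [hr]
      gcongr
      exact hCbound (φ - ψ) j
    calc ‖Complex.exp (ψ j) - Complex.exp (φ j)‖
        = ‖Complex.exp (ψ j)‖ * ‖Complex.exp (φ j - ψ j) - 1‖ := h2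
      _ ≤ ‖Complex.exp (ψ j)‖ * r := by
          exact mul_le_mul_of_nonneg_left h3 (norm_nonneg _)
      _ = ‖((r:ℂ) • fun j => Complex.exp (ψ j)) j‖ := by
          simp [Complex.norm_real, Real.norm_eq_abs, abs_of_nonneg hr0, mul_comm]
  calc N (fun j => Complex.exp (ψ j) - Complex.exp (φ j))
      ≤ N ((r:ℂ) • fun j => Complex.exp (ψ j)) := key
    _ = ‖(r:ℂ)‖ * N (fun j => Complex.exp (ψ j)) := hNsmul _ _
    _ = N (fun j => Complex.exp (ψ j)) * r := by
        rw [Complex.norm_real, Real.norm_of_nonneg hr0, mul_comm]
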